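/- (Hardy, classical ingredient) Let h be an entire function on C^m such that |h(z)| ≤ C e^{‖z‖²/2} for all z ∈ C^m and |h(y)| ≤ C e^{-‖y‖²/2} for all y ∈ R^m. Then h(z) = A e^{-z²/2} for some constant A (where z² = Σ z_j² for z ∈ C^m). -/

import Mathlib

open Complex Set Filter

noncomputable section

lemma diff_conj_conj {f : ℂ → ℂ} (hf : Differentiable ℂ f) :
    Differentiable ℂ fun z => (starRingEnd ℂ) (f ((starRingEnd ℂ) z)) := by
  intro z
  obtain ⟨d, hd⟩ : ∃ d, HasDerivAt f d ((starRingEnd ℂ) z) :=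
    ⟨_, (hf _).hasDerivAt⟩
  rw [hasDerivAt_iff_tendsto] at hd
  have hconj : Tendsto (starRingEnd ℂ) (nhds z) (nhds ((starRingEnd ℂ) z)) :=
    (continuous_star.tendsto z)
  have htt := hd.comp hconj
  have key : HasDerivAt (fun w => (starRingEnd ℂ) (f ((starRingEnd ℂ) w)))
      ((starRingEnd ℂ) d) z := by
    rw [hasDerivAt_iff_tendsto]
    convert htt using 2 with w
    simp only [Function.comp_apply, smul_eq_mul, ← map_sub]
    set A := f ((starRingEnd ℂ) w) - f ((starRingEnd ℂ) z) with hA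
    rw [show A - (starRingEnd ℂ) (w - z) * d
        = (starRingEnd ℂ) ((starRingEnd ℂ) A - (w - z) * (starRingEnd ℂ) d) by
      simp [map_sub, map_mul]]
    rw [RCLike.norm_conj, RCLike.norm_conj]

  exact key.differentiableAt

lemma quadI {ψ : ℂ → ℂ} (hψ : Differentiable ℂ ψ) {C : ℝ} (hC : 0 ≤ C)
    (hg : ∀ z : ℂ, ‖ψ z‖ ≤ C * Real.exp (z.re ^ 2))
    (hx : ∀ x : ℝ, 0 ≤ x → ‖ψ (x : ℂ)‖ ≤ C) :
    ∀ z : ℂ, 0 < z.re → 0 < z.im → ‖ψ z‖ ≤ C := by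
  intro z0 hre him
  have hz0 : z0 ≠ 0 := fun h => by simp [h] at hre
  have key : ∀ δ : ℝ, 0 < δ → ‖ψ z0‖ ≤ C * Real.exp δ := by
    intro δ hδ
    set T : ℝ := max (z0.im / z0.re) (z0.re * z0.im / δ) with hT
    have hT0 : 0 < T := lt_max_of_lt_left (div_pos him hre)
    set b : ℝ := Real.arctan T with hbdef
    have hb0 : 0 < b := by rw [hbdef, ← Real.arctan_zero]; exact Real.arctan_strictMono hT0
    have hb2 : b < Real.pi / 2 := Real.arctan_lt_pi_div_two T
    have hsin : 0 < Real.sin b := Real.sin_pos_of_pos_of_lt_pi hb0 (by linarith [Real.pi_pos])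
    have hcos : 0 < Real.cos b := Real.cos_pos_of_mem_Ioo ⟨by linarith, hb2⟩
    set ε : ℝ := Real.cos b / (2 * Real.sin b) with hεdef
    have hε : 0 < ε := div_pos hcos (by linarith)
    set F : ℂ → ℂ := fun z => ψ z * Complex.exp ((ε : ℂ) * Complex.I * z ^ 2) with hFdef
    have hFnorm : ∀ z : ℂ, ‖F z‖ = ‖ψ z‖ * Real.exp (-(2 * ε) * (z.re * z.im)) := by
      intro z
      rw [hFdef]
      simp only [norm_mul, Complex.norm_exp]
      congr 2
      simp [Complex.mul_re, Complex.mul_im, pow_two]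
      ring
    have hFdiff : Differentiable ℂ F :=
      hψ.mul (((differentiable_pow 2).const_mul ((ε : ℂ) * Complex.I)).cexp)
    have hstrip : ‖F (Complex.exp (Complex.log z0))‖ ≤ C := by
      apply PhragmenLindelof.horizontal_strip
        (hfd := (hFdiff.comp Complex.differentiable_exp).diffContOnCl)
        (a := 0) (b := b)
      · refine ⟨2, ?_, 1, ?_⟩
        · rw [sub_zero, lt_div_iff₀ hb0]; linarith
        · rw [Asymptotics.isBigO_iff]
          refine ⟨C, Filter.eventually_inf_principal.2 (Filter.Eventually.of_forall ?_)⟩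
          intro w hw
          have hw1 : 0 < w.im := hw.1
          have hw2 : w.im < b := hw.2
          set z := Complex.exp w with hz
          have hzre : z.re = Real.exp w.re * Real.cos w.im := Complex.exp_re w
          have hzim : z.im = Real.exp w.re * Real.sin w.im := Complex.exp_im w
          have hcosw : 0 < Real.cos w.im :=
            Real.cos_pos_of_mem_Ioo ⟨by linarith, by linarith⟩
          have hsinw : 0 < Real.sin w.im :=
            Real.sin_pos_of_pos_of_lt_pi hw1 (by linarith [Real.pi_pos])
          have hxy : 0 ≤ z.re * z.im := by
            rw [hzre, hzim]; positivity
          have h1 : ‖F z‖ ≤ C * Real.exp (z.re ^ 2) := by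
            rw [hFnorm]
            calc ‖ψ z‖ * Real.exp (-(2 * ε) * (z.re * z.im))
                ≤ (C * Real.exp (z.re ^ 2)) * 1 := by
                  apply mul_le_mul (hg z) ?_ (Real.exp_pos _).le
                    (by positivity)
                  rw [Real.exp_le_one_iff]
                  nlinarith
              _ = C * Real.exp (z.re ^ 2) := mul_one _
          have h2 : z.re ^ 2 ≤ Real.exp (2 * |w.re|) := by
            have : z.re ^ 2 ≤ (Real.exp w.re) ^ 2 := by
              rw [hzre]
              calc (Real.exp w.re * Real.cos w.im) ^ 2
                  = (Real.exp w.re) ^ 2 * (Real.cos w.im) ^ 2 := by ring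
                _ ≤ (Real.exp w.re) ^ 2 * 1 := by
                    have := Real.cos_sq_le_one w.im
                    nlinarith [sq_nonneg (Real.exp w.re)]
                _ = (Real.exp w.re) ^ 2 := mul_one _
            calc z.re ^ 2 ≤ (Real.exp w.re) ^ 2 := this
              _ = Real.exp (2 * w.re) := by
                  rw [← Real.exp_nat_mul]; norm_num
              _ ≤ Real.exp (2 * |w.re|) := by
                  apply Real.exp_le_exp.2
                  have := le_abs_self w.re
                  nlinarith [abs_nonneg w.re]
          calc ‖F z‖ ≤ C * Real.exp (z.re ^ 2) := h1
            _ ≤ C * Real.exp (Real.exp (2 * |w.re|)) := by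
                apply mul_le_mul_of_nonneg_left (Real.exp_le_exp.2 h2) hC
            _ ≤ C * ‖Real.exp (1 * Real.exp (2 * |w.re|))‖ := by
                rw [one_mul, Real.norm_eq_abs, abs_of_pos (Real.exp_pos _)]
      · intro w hw
        have hwre : Complex.exp w = ((Real.exp w.re : ℝ) : ℂ) := by
          apply Complex.ext
          · rw [Complex.exp_re, hw, Real.cos_zero, mul_one, Complex.ofReal_re]
          · rw [Complex.exp_im, hw, Real.sin_zero, mul_zero, Complex.ofReal_im]
        rw [Function.comp_apply, hwre, hFnorm]
        have : ((Real.exp w.re : ℝ) : ℂ).im = 0 := Complex.ofReal_im _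
        rw [this, mul_zero, mul_zero, Real.exp_zero, mul_one]
        exact hx _ (Real.exp_pos _).le
      · intro w hw
        rw [Function.comp_apply, hFnorm]
        set z := Complex.exp w with hz
        have hzre : z.re = Real.exp w.re * Real.cos b := by rw [hz, Complex.exp_re, hw]
        have hzim : z.im = Real.exp w.re * Real.sin b := by rw [hz, Complex.exp_im, hw]
        have hkey : z.re ^ 2 - 2 * ε * (z.re * z.im) = 0 := by
          rw [hzre, hzim, hεdef]
          field_simp
          ring
        calc ‖ψ z‖ * Real.exp (-(2 * ε) * (z.re * z.im))
            ≤ (C * Real.exp (z.re ^ 2)) * Real.exp (-(2 * ε) * (z.re * z.im)) :=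
              mul_le_mul_of_nonneg_right (hg z) (Real.exp_pos _).le
          _ = C * Real.exp (z.re ^ 2 - 2 * ε * (z.re * z.im)) := by
              rw [mul_assoc, ← Real.exp_add]; ring_nf
          _ = C := by rw [hkey, Real.exp_zero, mul_one]
      · rw [Complex.log_im]; exact Complex.arg_nonneg_iff.2 him.le
      · rw [Complex.log_im]
        by_contra hcon
        push_neg at hcon
        have harg2 : Complex.arg z0 < Real.pi / 2 :=
          Complex.arg_lt_pi_div_two_iff.2 (Or.inl hre)
        have := Real.tan_lt_tan_of_lt_of_lt_pi_div_two (by linarith : -(Real.pi/2) < b) harg2 hcon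
        rw [Real.tan_arctan, Complex.tan_arg] at this
        exact absurd (le_max_left (z0.im / z0.re) (z0.re * z0.im / δ)) (not_le.2 this)
    rw [Complex.exp_log hz0] at hstrip
    rw [hFnorm z0] at hstrip
    have hεb : 2 * ε * (z0.re * z0.im) ≤ δ := by
      have htan : Real.tan b = T := Real.tan_arctan T
      have h2e : 2 * ε = Real.cos b / Real.sin b := by rw [hεdef]; field_simp
      have hts : Real.cos b / Real.sin b = T⁻¹ := by
        rw [← htan, Real.tan_eq_sin_div_cos]
        field_simp
      have hTge : z0.re * z0.im / δ ≤ T := le_max_right _ _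
      have hxy0 : 0 < z0.re * z0.im := mul_pos hre him
      rw [h2e, hts]
      rw [inv_mul_le_iff₀ hT0] -- T⁻¹ * (x*y) ≤ δ ↔ x*y ≤ T * δ ??
      calc z0.re * z0.im = (z0.re * z0.im / δ) * δ := by field_simp
        _ ≤ T * δ := by apply mul_le_mul_of_nonneg_right hTge hδ.le
    calc ‖ψ z0‖ = (‖ψ z0‖ * Real.exp (-(2 * ε) * (z0.re * z0.im))) *
          Real.exp (2 * ε * (z0.re * z0.im)) := by
          rw [mul_assoc, ← Real.exp_add]; simp
      _ ≤ C * Real.exp (2 * ε * (z0.re * z0.im)) :=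
          mul_le_mul_of_nonneg_right hstrip (Real.exp_pos _).le
      _ ≤ C * Real.exp δ := mul_le_mul_of_nonneg_left (Real.exp_le_exp.2 hεb) hC
  have htend : Filter.Tendsto (fun δ : ℝ => C * Real.exp δ) (nhdsWithin 0 (Set.Ioi 0))
      (nhds (C * Real.exp 0)) :=
    ((Real.continuous_exp.continuousAt.const_smul C).tendsto.mono_left nhdsWithin_le_nhds)
  rw [Real.exp_zero, mul_one] at htend
  exact ge_of_tendsto htend (eventually_nhdsWithin_of_forall fun δ hδ => key δ hδ)

lemma globalBound {ψ : ℂ → ℂ} (hψ : Differentiable ℂ ψ) {C : ℝ} (hC : 0 ≤ C)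
    (hg : ∀ z : ℂ, ‖ψ z‖ ≤ C * Real.exp (z.re ^ 2))
    (hx : ∀ x : ℝ, ‖ψ (x : ℂ)‖ ≤ C) :
    ∀ z : ℂ, ‖ψ z‖ ≤ C := by
  have half : ∀ (φ : ℂ → ℂ), Differentiable ℂ φ →
      (∀ z : ℂ, ‖φ z‖ ≤ C * Real.exp (z.re ^ 2)) →
      (∀ x : ℝ, ‖φ (x : ℂ)‖ ≤ C) →
      ∀ z : ℂ, 0 ≤ z.re → ‖φ z‖ ≤ C := by
    intro φ hφ hgφ hxφ z hz
    rcases eq_or_lt_of_le hz with h0 | h0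
    · have := hgφ z
      rw [← h0] at this
      simpa using this
    · rcases lt_trichotomy z.im 0 with h1 | h1 | h1
      · -- lower: conjugate
        set φ' : ℂ → ℂ := fun w => (starRingEnd ℂ) (φ ((starRingEnd ℂ) w)) with hφ'
        have h2 : ‖φ' ((starRingEnd ℂ) z)‖ ≤ C := by
          apply quadI (diff_conj_conj hφ) hC
          · intro w
            simp only [RCLike.norm_conj]
            calc ‖φ ((starRingEnd ℂ) w)‖ ≤ C * Real.exp (((starRingEnd ℂ) w).re ^ 2) := hgφ _
              _ = C * Real.exp (w.re ^ 2) := by rw [Complex.conj_re]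
          · intro x _
            simp only [RCLike.norm_conj, Complex.conj_ofReal]
            exact hxφ x
          · rw [Complex.conj_re]; exact h0
          · rw [Complex.conj_im]; linarith
        rw [hφ'] at h2
        simp only [Complex.conj_conj, RCLike.norm_conj] at h2
        exact h2
      · -- real axis
        have hzx : z = ((z.re : ℝ) : ℂ) := Complex.ext rfl (by simp [h1])
        rw [hzx]; exact hxφ z.re
      · exact quadI hφ hC hgφ (fun x _ => hxφ x) z h0 h1
  intro z
  rcases le_total 0 z.re with h | h
  · exact half ψ hψ hg hx z h
  · set ψ' : ℂ → ℂ := fun w => ψ (-w) with hψ'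
    have h2 : ‖ψ' (-z)‖ ≤ C := by
      apply half ψ' (hψ.comp differentiable_neg)
      · intro w; rw [hψ']
        calc ‖ψ (-w)‖ ≤ C * Real.exp ((-w).re ^ 2) := hg _
          _ = C * Real.exp (w.re ^ 2) := by rw [Complex.neg_re, neg_sq]
      · intro x
        show ‖ψ (-((x : ℝ) : ℂ))‖ ≤ C
        have : -((x : ℝ) : ℂ) = (((-x : ℝ) : ℝ) : ℂ) := by push_cast; ring
        rw [this]
        exact hx (-x)
      · rw [Complex.neg_re]; linarith
    rw [hψ'] at h2
    simpa using h2

lemma oneDim {φ : ℂ → ℂ} (hφ : Differentiable ℂ φ) {C : ℝ} (hC : 0 ≤ C)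
    (hb : ∀ z : ℂ, ‖φ z‖ ≤ C * Real.exp (‖z‖ ^ 2 / 2))
    (hr : ∀ x : ℝ, ‖φ (x : ℂ)‖ ≤ C * Real.exp (-(x ^ 2) / 2)) :
    ∀ z : ℂ, φ z = φ 0 * Complex.exp (-(z ^ 2) / 2) := by
  set ψ : ℂ → ℂ := fun z => φ z * Complex.exp (z ^ 2 / 2) with hψdef
  have hψdiff : Differentiable ℂ ψ :=
    hφ.mul (((differentiable_pow 2).div_const 2).cexp)
  have hψnorm : ∀ z : ℂ, ‖ψ z‖ = ‖φ z‖ * Real.exp ((z.re ^ 2 - z.im ^ 2) / 2) := by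
    intro z
    rw [hψdef]
    simp only [norm_mul, Complex.norm_exp]
    congr 2
    simp [Complex.div_re, Complex.mul_re, Complex.normSq_apply, pow_two]
    try ring
  have habs : ∀ z : ℂ, ‖z‖ ^ 2 = z.re ^ 2 + z.im ^ 2 := by
    intro z
    rw [Complex.sq_norm, Complex.normSq_apply]; ring
  have hg : ∀ z : ℂ, ‖ψ z‖ ≤ C * Real.exp (z.re ^ 2) := by
    intro z
    rw [hψnorm]
    calc ‖φ z‖ * Real.exp ((z.re ^ 2 - z.im ^ 2) / 2)
        ≤ (C * Real.exp (‖z‖ ^ 2 / 2)) * Real.exp ((z.re ^ 2 - z.im ^ 2) / 2) :=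
          mul_le_mul_of_nonneg_right (hb z) (Real.exp_pos _).le
      _ = C * Real.exp (‖z‖ ^ 2 / 2 + (z.re ^ 2 - z.im ^ 2) / 2) := by
          rw [mul_assoc, ← Real.exp_add]
      _ = C * Real.exp (z.re ^ 2) := by rw [habs]; ring_nf
  have hx : ∀ x : ℝ, ‖ψ (x : ℂ)‖ ≤ C := by
    intro x
    rw [hψnorm]
    have h1 : ((x : ℂ)).re = x := Complex.ofReal_re x
    have h2 : ((x : ℂ)).im = 0 := Complex.ofReal_im x
    rw [h1, h2]
    calc ‖φ (x : ℂ)‖ * Real.exp ((x ^ 2 - 0 ^ 2) / 2)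
        ≤ (C * Real.exp (-(x ^ 2) / 2)) * Real.exp ((x ^ 2 - 0 ^ 2) / 2) :=
          mul_le_mul_of_nonneg_right (hr x) (Real.exp_pos _).le
      _ = C * Real.exp (-(x ^ 2) / 2 + (x ^ 2 - 0 ^ 2) / 2) := by
          rw [mul_assoc, ← Real.exp_add]
      _ = C := by
          rw [show (-(x ^ 2) / 2 + (x ^ 2 - 0 ^ 2) / 2 : ℝ) = 0 by ring, Real.exp_zero, mul_one]
  have hbdd : ∀ z : ℂ, ‖ψ z‖ ≤ C := globalBound hψdiff hC hg hx
  have hconst : ∀ z : ℂ, ψ z = ψ 0 := by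
    intro z
    apply hψdiff.apply_eq_apply_of_bounded
    apply Bornology.IsBounded.subset (Metric.isBounded_closedBall (x := (0:ℂ)) (r := C))
    rintro w ⟨u, rfl⟩
    simpa [Metric.mem_closedBall, dist_eq_norm] using hbdd u
  intro z
  have h1 : ψ z = φ 0 := by
    rw [hconst z, hψdef]; simp
  have h2 : φ z * Complex.exp (z ^ 2 / 2) = φ 0 := h1
  have h3 : Complex.exp (z ^ 2 / 2) * Complex.exp (-(z ^ 2) / 2) = 1 := by
    rw [← Complex.exp_add]; ring_nf; exact Complex.exp_zero
  calc φ z = φ z * (Complex.exp (z ^ 2 / 2) * Complex.exp (-(z ^ 2) / 2)) := by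
        rw [h3, mul_one]
    _ = (φ z * Complex.exp (z ^ 2 / 2)) * Complex.exp (-(z ^ 2) / 2) := by ring
    _ = φ 0 * Complex.exp (-(z ^ 2) / 2) := by rw [h2]

lemma identity1D {F : ℂ → ℂ} (hF : Differentiable ℂ F) {c : ℂ}
    (hr : ∀ x : ℝ, F ((x : ℝ) : ℂ) = c) : ∀ w : ℂ, F w = c := by
  have h1 : AnalyticOnNhd ℂ F Set.univ :=
    Complex.analyticOnNhd_univ_iff_differentiable.2 hF
  have h2 : AnalyticOnNhd ℂ (fun _ => c) Set.univ :=
    Complex.analyticOnNhd_univ_iff_differentiable.2 (differentiable_const c)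
  have hseq : Tendsto (fun n : ℕ => ((((n : ℝ) + 1)⁻¹ : ℝ) : ℂ)) atTop
      (nhdsWithin 0 {(0 : ℂ)}ᶜ) := by
    rw [tendsto_nhdsWithin_iff]
    constructor
    · have : Tendsto (fun n : ℕ => (((n : ℝ) + 1)⁻¹ : ℝ)) atTop (nhds 0) :=
        tendsto_one_div_add_atTop_nhds_zero_nat.congr (by intro n; rw [one_div])
      have h3 := (Complex.continuous_ofReal.tendsto 0).comp this
      simp only [Function.comp_def, Complex.ofReal_zero] at h3
      exact h3
    · filter_upwards with n
      simp only [Set.mem_compl_iff, Set.mem_singleton_iff]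
      intro hcon
      have : (((n : ℝ) + 1)⁻¹ : ℝ) = 0 := by exact_mod_cast hcon
      have hpos : (0 : ℝ) < ((n : ℝ) + 1)⁻¹ := by positivity
      linarith [this ▸ hpos]
  have hfreq : ∃ᶠ z in nhdsWithin 0 {(0 : ℂ)}ᶜ, F z = c :=
    hseq.frequently (Filter.Frequently.of_forall fun n => hr _)
  have heq : Set.EqOn F (fun _ => c) Set.univ :=
    h1.eqOn_of_preconnected_of_frequently_eq h2 isPreconnected_univ (Set.mem_univ 0) hfreq
  exact fun w => heq (Set.mem_univ w)

/-- Complex-analytic lemma behind the equality case of Hardy's theorem: if `h` is entire on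
`ℂ^m` with `|h(z)| ≤ C e^{‖z‖²/2}` everywhere and `|h(y)| ≤ C e^{-‖y‖²/2}` on `ℝ^m`,
then `h(z) = A e^{-z²/2}` for some constant `A`, where `z² = ∑ z_j²`. -/
theorem hardy_entire_lemma (m : ℕ)
    (h : EuclideanSpace ℂ (Fin m) → ℂ) (hh : Differentiable ℂ h)
    (C : ℝ) (hC : 0 < C)
    (hbound : ∀ z, ‖h z‖ ≤ C * Real.exp (‖z‖ ^ 2 / 2))
    (hreal : ∀ y : EuclideanSpace ℝ (Fin m),
      ‖h (WithLp.toLp 2 (fun i => (y i : ℂ)))‖ ≤ C * Real.exp (-‖y‖ ^ 2 / 2)) :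
    ∃ A : ℂ, ∀ z, h z = A * Complex.exp (-(∑ j, z j ^ 2) / 2) := by
  classical
  set g : EuclideanSpace ℂ (Fin m) → ℂ :=
    fun z => h z * Complex.exp ((∑ j, z j ^ 2) / 2) with hgdef
  have hproj : ∀ j : Fin m, Differentiable ℂ
      (fun z : EuclideanSpace ℂ (Fin m) => z j) :=
    fun j => (EuclideanSpace.proj j : EuclideanSpace ℂ (Fin m) →L[ℂ] ℂ).differentiable
  have hgdiff : Differentiable ℂ g := by
    apply hh.mul
    apply Differentiable.cexp
    have hd : Differentiable ℂ (fun z : EuclideanSpace ℂ (Fin m) => ∑ j, z j ^ 2) :=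
      Differentiable.fun_sum fun j _ => (hproj j).fun_pow 2
    have heq : (fun z : EuclideanSpace ℂ (Fin m) => (∑ j, z j ^ 2) / 2) =
        fun z : EuclideanSpace ℂ (Fin m) => (∑ j, z j ^ 2) * (2 : ℂ)⁻¹ := by
      funext zz; rw [div_eq_mul_inv]
    rw [heq]
    exact hd.mul_const _
  -- on real points g is constant equal to h 0
  have hnorm2 : ∀ y : EuclideanSpace ℝ (Fin m),
      ((∑ j, ((y j : ℂ)) ^ 2)) = ((‖y‖ ^ 2 : ℝ) : ℂ) := by
    intro y
    have h1 : ‖y‖ ^ 2 = ∑ j, (y j) ^ 2 := by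
      rw [EuclideanSpace.norm_eq, Real.sq_sqrt (by positivity)]
      congr 1; funext j; rw [Real.norm_eq_abs, _root_.sq_abs]
    rw [h1]
    push_cast
    rfl
  have hgreal : ∀ y : EuclideanSpace ℝ (Fin m), g (WithLp.toLp 2 (fun i => (y i : ℂ))) = h 0 := by
    intro y
    by_cases hy : y = 0
    · subst hy
      have hz : WithLp.toLp 2 (fun i : Fin m => (((0 : EuclideanSpace ℝ (Fin m)) i : ℝ) : ℂ)) =
          (0 : EuclideanSpace ℂ (Fin m)) := by
        ext i; simp
      rw [hz]
      show h 0 * Complex.exp ((∑ j, (0 : EuclideanSpace ℂ (Fin m)) j ^ 2) / 2) = h 0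
      have : (∑ j, (0 : EuclideanSpace ℂ (Fin m)) j ^ 2) = 0 := by
        apply Finset.sum_eq_zero
        intro j _
        show (0 : ℂ) ^ 2 = 0
        ring
      rw [this]
      simp
    · have hny : ‖y‖ ≠ 0 := norm_ne_zero_iff.2 hy
      set u : EuclideanSpace ℝ (Fin m) := ‖y‖⁻¹ • y with hu
      set v : EuclideanSpace ℂ (Fin m) := WithLp.toLp 2 (fun i => ((u i : ℝ) : ℂ)) with hv
      have hunorm : ‖u‖ = 1 := by
        rw [hu, norm_smul, norm_inv, norm_norm, inv_mul_cancel₀ hny]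
      have hvnorm : ‖v‖ = 1 := by
        have h1 : ‖v‖ = ‖u‖ := by
          rw [EuclideanSpace.norm_eq, EuclideanSpace.norm_eq]
          congr 1
          apply Finset.sum_congr rfl
          intro i _
          rw [hv]
          simp [Complex.norm_real]
        rw [h1, hunorm]
      set φ : ℂ → ℂ := fun w => h (w • v) with hφ
      have hφdiff : Differentiable ℂ φ :=
        hh.comp (differentiable_id.smul_const v)
      have hφb : ∀ w : ℂ, ‖φ w‖ ≤ C * Real.exp (‖w‖ ^ 2 / 2) := by
        intro w
        have hw : ‖w • v‖ = ‖w‖ := by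
          rw [norm_smul, hvnorm, mul_one]
        calc ‖h (w • v)‖ ≤ C * Real.exp (‖w • v‖ ^ 2 / 2) := hbound _
          _ = C * Real.exp (‖w‖ ^ 2 / 2) := by rw [hw]
      have hsmul : ∀ x : ℝ, ((x : ℂ) • v) = WithLp.toLp 2 (fun i => (((x • u) i : ℝ) : ℂ)) := by
        intro x
        ext i
        show (x : ℂ) * ((u i : ℝ) : ℂ) = (((x • u) i : ℝ) : ℂ)
        have hxi : (x • u) i = x * u i := rfl
        rw [hxi]
        push_cast
        ring
      have hφr : ∀ x : ℝ, ‖φ ((x : ℝ) : ℂ)‖ ≤ C * Real.exp (-(x ^ 2) / 2) := by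
        intro x
        show ‖h ((x : ℂ) • v)‖ ≤ _
        rw [hsmul x]
        calc ‖h (WithLp.toLp 2 (fun i => (((x • u) i : ℝ) : ℂ)))‖
            ≤ C * Real.exp (-‖x • u‖ ^ 2 / 2) := hreal _
          _ = C * Real.exp (-(x ^ 2) / 2) := by
              rw [norm_smul, hunorm, mul_one, Real.norm_eq_abs, _root_.sq_abs]
      have hone := oneDim hφdiff hC.le hφb hφr ((‖y‖ : ℝ) : ℂ)
      have hyv : ((‖y‖ : ℝ) : ℂ) • v = WithLp.toLp 2 (fun i => ((y i : ℝ) : ℂ)) := by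
        ext i
        show ((‖y‖ : ℝ) : ℂ) * ((u i : ℝ) : ℂ) = ((y i : ℝ) : ℂ)
        have hui : u i = ‖y‖⁻¹ * y i := rfl
        rw [hui]
        norm_cast
        field_simp
      have e1 : φ ((‖y‖ : ℝ) : ℂ) = h (WithLp.toLp 2 (fun i => ((y i : ℝ) : ℂ))) := by
        show h (((‖y‖ : ℝ) : ℂ) • v) = _
        rw [hyv]
      have e2 : φ 0 = h 0 := by
        show h ((0 : ℂ) • v) = h 0
        rw [zero_smul]
      have e3 : (((‖y‖ : ℝ) : ℂ)) ^ 2 = ((‖y‖ ^ 2 : ℝ) : ℂ) := by push_cast; ring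
      have e4 : h (WithLp.toLp 2 (fun i => ((y i : ℝ) : ℂ))) =
          h 0 * Complex.exp (-(((‖y‖ ^ 2 : ℝ) : ℂ)) / 2) := by
        rw [← e1, hone, e2, e3]
      show h (WithLp.toLp 2 (fun i => ((y i : ℝ) : ℂ))) *
          Complex.exp ((∑ j, ((y j : ℝ) : ℂ) ^ 2) / 2) = h 0
      rw [hnorm2 y, e4, mul_assoc, ← Complex.exp_add,
        show -(((‖y‖ ^ 2 : ℝ) : ℂ)) / 2 + ((‖y‖ ^ 2 : ℝ) : ℂ) / 2 = 0 by ring,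
        Complex.exp_zero, mul_one]
  -- identity theorem coordinate by coordinate
  have key : ∀ k : ℕ, ∀ z : EuclideanSpace ℂ (Fin m),
      (∀ j : Fin m, k ≤ (j : ℕ) → (z j).im = 0) → g z = h 0 := by
    intro k
    induction k with
    | zero =>
      intro z hz
      have hzy : z = WithLp.toLp 2 (fun i => (((WithLp.toLp 2 (fun i => (z i).re)) : EuclideanSpace ℝ (Fin m)) i : ℂ)) := by
        ext i
        exact Complex.ext (by simp) (by simpa using hz i (Nat.zero_le _))
      rw [hzy]
      exact hgreal (WithLp.toLp 2 (fun i => (z i).re))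
    | succ k ih =>
      intro z hz
      by_cases hk : k < m
      · set k0 : Fin m := ⟨k, hk⟩ with hk0
        set e : EuclideanSpace ℂ (Fin m) := EuclideanSpace.single k0 1 with he
        set base : EuclideanSpace ℂ (Fin m) := WithLp.toLp 2 (Function.update z k0 0) with hbase
        have hupd : ∀ w : ℂ, base + w • e = WithLp.toLp 2 (Function.update z k0 w) := by
          intro w
          ext j
          show base j + w * e j = _
          by_cases hj : j = k0
          · subst hj
            rw [hbase, he]
            simp [EuclideanSpace.single_apply]
          · rw [hbase, he]
            simp [Function.update_of_ne hj, EuclideanSpace.single_apply, hj]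
        set F : ℂ → ℂ := fun w => g (base + w • e) with hF
        have hFdiff : Differentiable ℂ F :=
          hgdiff.comp ((differentiable_id.smul_const e).const_add base)
        have hFreal : ∀ x : ℝ, F ((x : ℝ) : ℂ) = h 0 := by
          intro x
          show g (base + ((x : ℝ) : ℂ) • e) = h 0
          rw [hupd]
          apply ih
          intro j hj
          by_cases hjk : j = k0
          · subst hjk
            rw [WithLp.ofLp_toLp, Function.update_self]
            exact Complex.ofReal_im x
          · rw [WithLp.ofLp_toLp, Function.update_of_ne hjk]
            apply hz
            have hne : (j : ℕ) ≠ k := by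
              intro hcon
              exact hjk (Fin.ext (by simp [hk0, hcon]))
            omega
        have hFall := identity1D hFdiff hFreal
        have h5 := hFall (z k0)
        have h6 : F (z k0) = g (WithLp.toLp 2 (Function.update z k0 (z k0))) := by
          show g (base + z k0 • e) = g (WithLp.toLp 2 (Function.update z k0 (z k0)))
          rw [hupd]
        rw [h6] at h5
        rwa [Function.update_eq_self, WithLp.toLp_ofLp] at h5
      · apply ih
        intro j hj
        exact absurd hj (not_le.2 (lt_of_lt_of_le j.isLt (not_lt.1 hk)))
  have hall : ∀ z, g z = h 0 :=
    fun z => key m z (fun j hj => absurd hj (not_le.2 j.isLt))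
  refine ⟨h 0, fun z => ?_⟩
  have hgz := hall z
  have hS : Complex.exp ((∑ j, z j ^ 2) / 2) * Complex.exp (-(∑ j, z j ^ 2) / 2) = 1 := by
    rw [← Complex.exp_add]
    ring_nf
    exact Complex.exp_zero
  calc h z = h z * (Complex.exp ((∑ j, z j ^ 2) / 2) *
        Complex.exp (-(∑ j, z j ^ 2) / 2)) := by rw [hS, mul_one]
    _ = (g z) * Complex.exp (-(∑ j, z j ^ 2) / 2) := by rw [hgdef]; ring
    _ = h 0 * Complex.exp (-(∑ j, z j ^ 2) / 2) := by rw [hgz]
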